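/- Let x* < x** be consecutive zeros of f with unique zero β of f' between them. Suppose c > 0, r'(x) > 0 on (x*, x**), and c < r(x) < 4c on (β, x**). Then the point x** − π/√(r(x**)) lies in the open interval (x*, β). -/

import Mathlib

open Real Set Filter

lemma sturm_lower (r f : ℝ → ℝ) (xs xss : ℝ) (hlt : xs < xss)
    (hrss : 0 < r xss)
    (hrmono : StrictMonoOn r (Set.Icc xs xss))
    (hf1 : Differentiable ℝ f) (hf2 : Differentiable ℝ (deriv f))
    (hode : ∀ t ∈ Set.Icc xs xss, deriv (deriv f) t + r t * f t = 0)
    (hzs : f xs = 0) (hzss : f xss = 0)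
    (hfpos : ∀ t ∈ Set.Ioo xs xss, 0 < f t) :
    Real.pi / Real.sqrt (r xss) < xss - xs := by
  set m := r xss with hm
  set s := Real.sqrt m with hsdef
  have hs : 0 < s := Real.sqrt_pos.mpr hrss
  have hms : m = s * s := (Real.mul_self_sqrt hrss.le).symm
  by_contra hcon
  push_neg at hcon
  -- hcon : xss - xs ≤ π / s
  rw [le_div_iff₀ hs] at hcon
  have hsx : s * (xss - xs) ≤ π := by linarith [mul_comm s (xss - xs)] 
  set G : ℝ → ℝ := fun t => Real.sin (s * (t - xs)) with hG
  set G' : ℝ → ℝ := fun t => s * Real.cos (s * (t - xs)) with hG'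
  set W : ℝ → ℝ := fun t => f t * G' t - deriv f t * G t with hW
  have hlin : ∀ t : ℝ, HasDerivAt (fun u => s * (u - xs)) s t := by
    intro t
    simpa using ((hasDerivAt_id t).sub_const xs).const_mul s
  have hGd : ∀ t : ℝ, HasDerivAt G (G' t) t := by
    intro t
    simpa [hG, hG', mul_comm, Function.comp_def] using (Real.hasDerivAt_sin (s * (t - xs))).comp t (hlin t)
  have hG'd : ∀ t : ℝ, HasDerivAt G' (-(m * G t)) t := by
    intro t
    have h1 := ((Real.hasDerivAt_cos (s * (t - xs))).comp t (hlin t)).const_mul s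
    refine h1.congr_deriv ?_
    simp only [hG, hms]
    ring
  have hWd : ∀ t : ℝ, HasDerivAt W
      (deriv f t * G' t + f t * (-(m * G t))
        - (deriv (deriv f) t * G t + deriv f t * G' t)) t := by
    intro t
    exact ((hf1 t).hasDerivAt.mul (hG'd t)).sub (((hf2 t).hasDerivAt).mul (hGd t))
  have hWcont : Continuous W := by
    rw [continuous_iff_continuousAt]
    exact fun t => (hWd t).continuousAt
  have hanti : StrictAntiOn W (Set.Icc xs xss) := by
    apply strictAntiOn_of_deriv_neg (convex_Icc _ _) hWcont.continuousOn
    rw [interior_Icc]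
    intro x hx
    rw [(hWd x).deriv]
    have hfx := hfpos x hx
    have hGx : 0 < G x := by
      apply Real.sin_pos_of_pos_of_lt_pi
      · exact mul_pos hs (by linarith [hx.1])
      · have : s * (x - xs) < s * (xss - xs) :=
          mul_lt_mul_of_pos_left (by linarith [hx.2]) hs
        linarith
    have hrx : r x < m := hrmono (Set.mem_Icc.mpr ⟨hx.1.le, hx.2.le⟩)
      (Set.mem_Icc.mpr ⟨hlt.le, le_rfl⟩) hx.2
    have hode' : deriv (deriv f) x = -(r x * f x) := by
      have := hode x ⟨hx.1.le, hx.2.le⟩; linarith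
    rw [hode']
    have key : (r x - m) * (f x * G x) < 0 :=
      mul_neg_of_neg_of_pos (by linarith) (mul_pos hfx hGx)
    nlinarith [key]
  have hWxs : W xs = 0 := by simp [hW, hG, hG', hzs]
  have hfder : deriv f xss ≤ 0 := by
    have hsl : Tendsto (slope f xss) (nhdsWithin xss (Set.Ioo xs xss)) (nhds (deriv f xss)) :=
      (hasDerivAt_iff_tendsto_slope.mp (hf1 xss).hasDerivAt).mono_left
        (nhdsWithin_mono _ (fun t ht => Set.mem_compl_singleton_iff.mpr (ne_of_lt ht.2)))
    have hnb : (nhdsWithin xss (Set.Ioo xs xss)).NeBot := by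
      rw [← mem_closure_iff_nhdsWithin_neBot, closure_Ioo hlt.ne]
      exact ⟨hlt.le, le_rfl⟩
    refine le_of_tendsto hsl ?_
    filter_upwards [self_mem_nhdsWithin] with t ht
    rw [slope_def_field, hzss]
    apply div_nonpos_iff.mpr
    exact Or.inl ⟨by linarith [hfpos t ht], by linarith [ht.2]⟩
  have hWxss : 0 ≤ W xss := by
    have hsin : 0 ≤ G xss := by
      apply Real.sin_nonneg_of_nonneg_of_le_pi
      · exact mul_nonneg hs.le (by linarith)
      · exact hsx
    simp only [hW, hzss, zero_mul, zero_sub, neg_nonneg]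
    exact mul_nonpos_of_nonpos_of_nonneg hfder hsin
  have := hanti (Set.mem_Icc.mpr ⟨le_rfl, hlt.le⟩) (Set.mem_Icc.mpr ⟨hlt.le, le_rfl⟩) hlt
  linarith

lemma sturm_upper (r f : ℝ → ℝ) (xs xss β : ℝ) (hlt : xs < xss)
    (hβ : β ∈ Set.Ioo xs xss)
    (hrβ : 0 < r β)
    (hrmono : StrictMonoOn r (Set.Icc xs xss))
    (hf1 : Differentiable ℝ f) (hf2 : Differentiable ℝ (deriv f))
    (hode : ∀ t ∈ Set.Icc xs xss, deriv (deriv f) t + r t * f t = 0)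
    (hzss : f xss = 0) (hfβ : deriv f β = 0)
    (hfpos : ∀ t ∈ Set.Ioo xs xss, 0 < f t) :
    xss - β < Real.pi / (2 * Real.sqrt (r β)) := by
  set m := r β with hm
  set s := Real.sqrt m with hsdef
  have hs : 0 < s := Real.sqrt_pos.mpr hrβ
  have hms : m = s * s := (Real.mul_self_sqrt hrβ.le).symm
  by_contra hcon
  push_neg at hcon
  -- hcon : π / (2 * s) ≤ xss - β
  obtain ⟨b, hb⟩ : ∃ b, b = β + π / (2 * s) := ⟨_, rfl⟩
  have hβb : β < b := by
    have h0 : 0 < π / (2 * s) := by positivity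
    rw [hb]; linarith
  have hbss : b ≤ xss := by
    rw [hb]; linarith
  have hsb : s * (b - β) = π / 2 := by
    rw [hb, add_sub_cancel_left]
    field_simp
  set G : ℝ → ℝ := fun t => Real.cos (s * (t - β)) with hG
  set G' : ℝ → ℝ := fun t => -(s * Real.sin (s * (t - β))) with hG'
  set W : ℝ → ℝ := fun t => f t * G' t - deriv f t * G t with hW
  have hlin : ∀ t : ℝ, HasDerivAt (fun u => s * (u - β)) s t := by
    intro t
    simpa using ((hasDerivAt_id t).sub_const β).const_mul s
  have hGd : ∀ t : ℝ, HasDerivAt G (G' t) t := by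
    intro t
    have := (Real.hasDerivAt_cos (s * (t - β))).comp t (hlin t)
    refine this.congr_deriv ?_
    simp only [hG']
    ring
  have hG'd : ∀ t : ℝ, HasDerivAt G' (-(m * G t)) t := by
    intro t
    have h1 := (((Real.hasDerivAt_sin (s * (t - β))).comp t (hlin t)).const_mul s).neg
    refine h1.congr_deriv ?_
    simp only [hG, hms]
    ring
  have hWd : ∀ t : ℝ, HasDerivAt W
      (deriv f t * G' t + f t * (-(m * G t))
        - (deriv (deriv f) t * G t + deriv f t * G' t)) t := by
    intro t
    exact ((hf1 t).hasDerivAt.mul (hG'd t)).sub (((hf2 t).hasDerivAt).mul (hGd t))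
  have hWcont : Continuous W := by
    rw [continuous_iff_continuousAt]
    exact fun t => (hWd t).continuousAt
  have hmono : StrictMonoOn W (Set.Icc β b) := by
    apply strictMonoOn_of_deriv_pos (convex_Icc _ _) hWcont.continuousOn
    rw [interior_Icc]
    intro x hx
    rw [(hWd x).deriv]
    have hxmem : x ∈ Set.Ioo xs xss := ⟨lt_trans hβ.1 hx.1, lt_of_lt_of_le hx.2 hbss⟩
    have hfx := hfpos x hxmem
    have hGx : 0 < G x := by
      apply Real.cos_pos_of_mem_Ioo
      constructor
      · have : 0 < s * (x - β) := mul_pos hs (by linarith [hx.1])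
        linarith [Real.pi_pos]
      · have : s * (x - β) < s * (b - β) := mul_lt_mul_of_pos_left (by linarith [hx.2]) hs
        linarith [hsb]
    have hrx : m < r x := hrmono (Set.mem_Icc.mpr ⟨hβ.1.le, hβ.2.le⟩)
      (Set.mem_Icc.mpr ⟨hxmem.1.le, hxmem.2.le⟩) hx.1
    have hode' : deriv (deriv f) x = -(r x * f x) := by
      have := hode x ⟨hxmem.1.le, hxmem.2.le⟩; linarith
    rw [hode']
    have key : 0 < (r x - m) * (f x * G x) :=
      mul_pos (by linarith) (mul_pos hfx hGx)
    nlinarith [key]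
  have hWβ : W β = 0 := by
    simp [hW, hG, hG', hfβ]
  have hfb : 0 ≤ f b := by
    rcases lt_or_eq_of_le hbss with h | h
    · exact (hfpos b ⟨lt_trans hβ.1 hβb, h⟩).le
    · rw [h, hzss]
  have hWb : W b ≤ 0 := by
    have h1 : G b = 0 := by
      simp only [hG]; rw [hsb]; exact Real.cos_pi_div_two
    have h2 : G' b = -s := by
      simp only [hG']; rw [hsb, Real.sin_pi_div_two, mul_one]
    simp only [hW, h1, h2, mul_zero, sub_zero]
    have : 0 ≤ f b * s := mul_nonneg hfb hs.le
    linarith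
  have := hmono (Set.mem_Icc.mpr ⟨le_rfl, hβb.le⟩) (Set.mem_Icc.mpr ⟨hβb.le, le_rfl⟩) hβb
  linarith

lemma key_location (r f : ℝ → ℝ) (xs xss β c : ℝ) (hlt : xs < xss)
    (hc : 0 < c)
    (hr : ContDiff ℝ 1 r)
    (hrpos : ∀ t ∈ Set.Icc xs xss, 0 < r t)
    (hf1 : Differentiable ℝ f) (hf2 : Differentiable ℝ (deriv f))
    (hode : ∀ t ∈ Set.Icc xs xss, deriv (deriv f) t + r t * f t = 0)
    (hzs : f xs = 0) (hzss : f xss = 0)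
    (hfpos : ∀ t ∈ Set.Ioo xs xss, 0 < f t)
    (hβ : β ∈ Set.Ioo xs xss) (hfβ : deriv f β = 0)
    (hrder : ∀ t ∈ Set.Ioo xs xss, 0 < deriv r t)
    (hrbd : ∀ t ∈ Set.Ioo β xss, c < r t ∧ r t < 4 * c) :
    xss - Real.pi / Real.sqrt (r xss) ∈ Set.Ioo xs β := by
  have hrmono : StrictMonoOn r (Set.Icc xs xss) := by
    apply strictMonoOn_of_deriv_pos (convex_Icc _ _) hr.continuous.continuousOn
    rw [interior_Icc]; exact hrder
  have hrss : 0 < r xss := hrpos xss ⟨hlt.le, le_rfl⟩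
  have hrβ : 0 < r β := hrpos β ⟨hβ.1.le, hβ.2.le⟩
  have hA := sturm_lower r f xs xss hlt hrss hrmono hf1 hf2 hode hzs hzss hfpos
  have hB := sturm_upper r f xs xss β hlt hβ hrβ hrmono hf1 hf2 hode hzss hfβ hfpos
  -- limits: r xss ≤ 4c and c ≤ r β
  have hnb1 : (nhdsWithin xss (Set.Ioo β xss)).NeBot := by
    rw [← mem_closure_iff_nhdsWithin_neBot, closure_Ioo hβ.2.ne]
    exact ⟨hβ.2.le, le_rfl⟩
  have hnb2 : (nhdsWithin β (Set.Ioo β xss)).NeBot := by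
    rw [← mem_closure_iff_nhdsWithin_neBot, closure_Ioo hβ.2.ne]
    exact ⟨le_rfl, hβ.2.le⟩
  have h4c : r xss ≤ 4 * c := by
    have ht1 : Tendsto r (nhdsWithin xss (Set.Ioo β xss)) (nhds (r xss)) :=
      hr.continuous.continuousAt.mono_left nhdsWithin_le_nhds
    refine le_of_tendsto ht1 ?_
    filter_upwards [self_mem_nhdsWithin] with t ht
    exact (hrbd t ht).2.le
  have hcβ : c ≤ r β := by
    have ht2 : Tendsto r (nhdsWithin β (Set.Ioo β xss)) (nhds (r β)) :=
      hr.continuous.continuousAt.mono_left nhdsWithin_le_nhds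
    refine ge_of_tendsto ht2 ?_
    filter_upwards [self_mem_nhdsWithin] with t ht
    exact (hrbd t ht).1.le
  have hsqrt : Real.sqrt (r xss) ≤ 2 * Real.sqrt (r β) := by
    have h1 : Real.sqrt (r xss) ≤ Real.sqrt (4 * r β) :=
      Real.sqrt_le_sqrt (by linarith)
    have h2 : Real.sqrt (4 * r β) = 2 * Real.sqrt (r β) := by
      rw [show (4 : ℝ) = 2 ^ 2 by norm_num, Real.sqrt_mul (by positivity),
        Real.sqrt_sq (by norm_num)]
    linarith
  have hs1 : 0 < Real.sqrt (r xss) := Real.sqrt_pos.mpr hrss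
  have hs2 : 0 < Real.sqrt (r β) := Real.sqrt_pos.mpr hrβ
  have hdiv : Real.pi / (2 * Real.sqrt (r β)) ≤ Real.pi / Real.sqrt (r xss) := by
    apply div_le_div_of_nonneg_left Real.pi_pos.le hs1 hsqrt
  constructor
  · linarith
  · linarith
theorem initial_guess_location (r f : ℝ → ℝ) (xs xss β c : ℝ) (hlt : xs < xss)
    (hc : 0 < c)
    (hr : ContDiff ℝ 1 r)
    (hrpos : ∀ t ∈ Set.Icc xs xss, 0 < r t)
    (hf1 : Differentiable ℝ f) (hf2 : Differentiable ℝ (deriv f))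
    (hode : ∀ t ∈ Set.Icc xs xss, deriv (deriv f) t + r t * f t = 0)
    (hzs : f xs = 0) (hzss : f xss = 0)
    (hcons : ∀ t ∈ Set.Ioo xs xss, f t ≠ 0)
    (hβ : β ∈ Set.Ioo xs xss) (hfβ : deriv f β = 0)
    (hβuniq : ∀ t ∈ Set.Ioo xs xss, deriv f t = 0 → t = β)
    (hrder : ∀ t ∈ Set.Ioo xs xss, 0 < deriv r t)
    (hrbd : ∀ t ∈ Set.Ioo β xss, c < r t ∧ r t < 4 * c) :
    xss - Real.pi / Real.sqrt (r xss) ∈ Set.Ioo xs β := by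
  have hsign : (∀ t ∈ Set.Ioo xs xss, 0 < f t) ∨ (∀ t ∈ Set.Ioo xs xss, f t < 0) := by
    rcases (Ne.lt_or_gt (hcons β hβ)) with hneg | hpos
    · right
      intro t ht
      by_contra hle
      push_neg at hle
      have htpos : 0 < f t := lt_of_le_of_ne hle (Ne.symm (hcons t ht))
      rcases lt_trichotomy t β with h | h | h
      · obtain ⟨z, hz, hfz⟩ := intermediate_value_Ioo' h.le hf1.continuous.continuousOn
          (show (0:ℝ) ∈ Set.Ioo (f β) (f t) from ⟨hneg, htpos⟩)
        exact hcons z ⟨lt_trans ht.1 hz.1, lt_trans hz.2 hβ.2⟩ hfz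
      · rw [h] at htpos; linarith
      · obtain ⟨z, hz, hfz⟩ := intermediate_value_Ioo h.le hf1.continuous.continuousOn
          (show (0:ℝ) ∈ Set.Ioo (f β) (f t) from ⟨hneg, htpos⟩)
        exact hcons z ⟨lt_trans hβ.1 hz.1, lt_trans hz.2 ht.2⟩ hfz
    · left
      intro t ht
      by_contra hle
      push_neg at hle
      have htneg : f t < 0 := lt_of_le_of_ne hle (hcons t ht)
      rcases lt_trichotomy t β with h | h | h
      · obtain ⟨z, hz, hfz⟩ := intermediate_value_Ioo h.le hf1.continuous.continuousOn
          (show (0:ℝ) ∈ Set.Ioo (f t) (f β) from ⟨htneg, hpos⟩)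
        exact hcons z ⟨lt_trans ht.1 hz.1, lt_trans hz.2 hβ.2⟩ hfz
      · rw [h] at htneg; linarith
      · obtain ⟨z, hz, hfz⟩ := intermediate_value_Ioo' h.le hf1.continuous.continuousOn
          (show (0:ℝ) ∈ Set.Ioo (f t) (f β) from ⟨htneg, hpos⟩)
        exact hcons z ⟨lt_trans hβ.1 hz.1, lt_trans hz.2 ht.2⟩ hfz
  rcases hsign with hfpos | hfneg
  · exact key_location r f xs xss β c hlt hc hr hrpos hf1 hf2 hode hzs hzss hfpos hβ hfβ
      hrder hrbd
  · set F : ℝ → ℝ := fun t => -f t with hF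
    have hF1 : Differentiable ℝ F := hf1.neg
    have hdF : deriv F = fun t => -deriv f t := funext fun t => deriv.neg
    have hF2 : Differentiable ℝ (deriv F) := by rw [hdF]; exact hf2.neg
    have hddF : ∀ t, deriv (deriv F) t = -deriv (deriv f) t := by
      intro t; rw [hdF]; exact deriv.neg
    have hodeF : ∀ t ∈ Set.Icc xs xss, deriv (deriv F) t + r t * F t = 0 := by
      intro t ht
      rw [hddF]
      have := hode t ht
      simp only [hF]
      ring_nf
      ring_nf at this
      linarith
    have hFβ : deriv F β = 0 := by rw [hdF]; simp [hfβ]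
    have hFpos : ∀ t ∈ Set.Ioo xs xss, 0 < F t := by
      intro t ht; simp only [hF, neg_pos]; exact hfneg t ht
    have hFzs : F xs = 0 := by simp [hF, hzs]
    have hFzss : F xss = 0 := by simp [hF, hzss]
    exact key_location r F xs xss β c hlt hc hr hrpos hF1 hF2 hodeF hFzs hFzss hFpos hβ hFβ
      hrder hrbd
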